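/- Lemma (positive semidefiniteness of Γ_α): for every α ∈ [0,1] with β = 1−α and every measurable function f : ℝ → ℝ whose variances under p₀, p₁, and the bridging density p_α are finite, Γ_α(f) := β Var₀(f) + α Var₁(f) − U(α) Var_α(f) ≥ 0. -/

import Mathlib

open MeasureTheory Real Set

private lemma intlin3 {μ : Measure ℝ} {u₁ u₂ u₃ : ℝ → ℝ}
    (h₁ : Integrable u₁ μ) (h₂ : Integrable u₂ μ) (h₃ : Integrable u₃ μ)
    (a₁ a₂ a₃ : ℝ) :
    ∫ w, (a₁ * u₁ w + a₂ * u₂ w + a₃ * u₃ w) ∂μ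
      = a₁ * (∫ w, u₁ w ∂μ) + a₂ * (∫ w, u₂ w ∂μ) + a₃ * (∫ w, u₃ w ∂μ) := by
  have H12 : Integrable (fun w => a₁ * u₁ w + a₂ * u₂ w) μ :=
    (h₁.const_mul a₁).add (h₂.const_mul a₂)
  rw [integral_add H12 (h₃.const_mul a₃), integral_add (h₁.const_mul a₁) (h₂.const_mul a₂),
    integral_const_mul, integral_const_mul, integral_const_mul]

private lemma intlin5 {μ : Measure ℝ} {u₁ u₂ u₃ u₄ u₅ : ℝ → ℝ}
    (h₁ : Integrable u₁ μ) (h₂ : Integrable u₂ μ) (h₃ : Integrable u₃ μ)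
    (h₄ : Integrable u₄ μ) (h₅ : Integrable u₅ μ) (a₁ a₂ a₃ a₄ a₅ : ℝ) :
    ∫ w, (a₁ * u₁ w + a₂ * u₂ w + a₃ * u₃ w + a₄ * u₄ w + a₅ * u₅ w) ∂μ
      = a₁ * (∫ w, u₁ w ∂μ) + a₂ * (∫ w, u₂ w ∂μ) + a₃ * (∫ w, u₃ w ∂μ)
        + a₄ * (∫ w, u₄ w ∂μ) + a₅ * (∫ w, u₅ w ∂μ) := by
  have H3 : Integrable (fun w => a₁ * u₁ w + a₂ * u₂ w + a₃ * u₃ w) μ :=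
    ((h₁.const_mul a₁).add (h₂.const_mul a₂)).add (h₃.const_mul a₃)
  have H4 : Integrable (fun w => a₁ * u₁ w + a₂ * u₂ w + a₃ * u₃ w + a₄ * u₄ w) μ :=
    H3.add (h₄.const_mul a₄)
  rw [integral_add H4 (h₅.const_mul a₅), integral_add H3 (h₄.const_mul a₄),
    intlin3 h₁ h₂ h₃, integral_const_mul, integral_const_mul]

private lemma intlin7 {μ : Measure ℝ} {u₁ u₂ u₃ u₄ u₅ u₆ u₇ : ℝ → ℝ}
    (h₁ : Integrable u₁ μ) (h₂ : Integrable u₂ μ) (h₃ : Integrable u₃ μ)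
    (h₄ : Integrable u₄ μ) (h₅ : Integrable u₅ μ) (h₆ : Integrable u₆ μ)
    (h₇ : Integrable u₇ μ) (a₁ a₂ a₃ a₄ a₅ a₆ a₇ : ℝ) :
    ∫ w, (a₁ * u₁ w + a₂ * u₂ w + a₃ * u₃ w + a₄ * u₄ w + a₅ * u₅ w + a₆ * u₆ w
        + a₇ * u₇ w) ∂μ
      = a₁ * (∫ w, u₁ w ∂μ) + a₂ * (∫ w, u₂ w ∂μ) + a₃ * (∫ w, u₃ w ∂μ)
        + a₄ * (∫ w, u₄ w ∂μ) + a₅ * (∫ w, u₅ w ∂μ) + a₆ * (∫ w, u₆ w ∂μ)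
        + a₇ * (∫ w, u₇ w ∂μ) := by
  have H5 : Integrable
      (fun w => a₁ * u₁ w + a₂ * u₂ w + a₃ * u₃ w + a₄ * u₄ w + a₅ * u₅ w) μ :=
    ((((h₁.const_mul a₁).add (h₂.const_mul a₂)).add (h₃.const_mul a₃)).add
      (h₄.const_mul a₄)).add (h₅.const_mul a₅)
  have H6 : Integrable
      (fun w => a₁ * u₁ w + a₂ * u₂ w + a₃ * u₃ w + a₄ * u₄ w + a₅ * u₅ w + a₆ * u₆ w) μ :=
    H5.add (h₆.const_mul a₆)
  rw [integral_add H6 (h₇.const_mul a₇), integral_add H5 (h₆.const_mul a₆),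
    intlin5 h₁ h₂ h₃ h₄ h₅, integral_const_mul, integral_const_mul]


/-- The mean `⟨g⟩_q = ∫_Ω g q` of `g` with respect to the density `q` on `Ω`. -/
noncomputable def wMean (Ω : Set ℝ) (q g : ℝ → ℝ) : ℝ :=
  ∫ w in Ω, g w * q w

/-- The variance `Var_q(g) = ⟨(g - ⟨g⟩_q)²⟩_q` of `g` with respect to the density `q`
on `Ω`. -/
noncomputable def wVar (Ω : Set ℝ) (q g : ℝ → ℝ) : ℝ :=
  ∫ w in Ω, (g w - wMean Ω q g) ^ 2 * q w

set_option maxHeartbeats 2000000 in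
/-- Lemma (positive semidefiniteness of `Γ_α`): for every `α ∈ [0,1]` with
`β = 1 - α` and every measurable `f : ℝ → ℝ` whose variances under `p₀`, `p₁`, and
the bridging density `p_α = (1/U(α)) p₀ p₁ / (α p₀ + β p₁)` are finite,
`Γ_α(f) = β Var₀(f) + α Var₁(f) - U(α) Var_α(f) ≥ 0`. -/
theorem Gamma_nonneg
    (p₀ p₁ : ℝ → ℝ) (Ω : Set ℝ)
    (hm0 : Measurable p₀) (hm1 : Measurable p₁)
    (hpos0 : ∀ w, 0 ≤ p₀ w) (hpos1 : ∀ w, 0 ≤ p₁ w)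
    (hnorm0 : ∫ w, p₀ w = 1) (hnorm1 : ∫ w, p₁ w = 1)
    (hΩ0 : Ω = {w | 0 < p₀ w}) (hΩ1 : Ω = {w | 0 < p₁ w})
    (α : ℝ) (hα : α ∈ Icc (0:ℝ) 1)
    (U : ℝ)
    (hU : U = ∫ w in Ω, p₀ w * p₁ w / (α * p₀ w + (1 - α) * p₁ w))
    (hUpos : 0 < U)
    (hUint : IntegrableOn (fun w => p₀ w * p₁ w / (α * p₀ w + (1 - α) * p₁ w)) Ω)
    (f : ℝ → ℝ) (hf : Measurable f)
    (hf0 : IntegrableOn (fun w => f w * p₀ w) Ω)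
    (hf1 : IntegrableOn (fun w => f w * p₁ w) Ω)
    (hfα : IntegrableOn (fun w =>
      f w * (p₀ w * p₁ w / ((α * p₀ w + (1 - α) * p₁ w) * U))) Ω)
    (hv0 : IntegrableOn (fun w => (f w - wMean Ω p₀ f) ^ 2 * p₀ w) Ω)
    (hv1 : IntegrableOn (fun w => (f w - wMean Ω p₁ f) ^ 2 * p₁ w) Ω)
    (hvα : IntegrableOn (fun w =>
      (f w - wMean Ω (fun v => p₀ v * p₁ v / ((α * p₀ v + (1 - α) * p₁ v) * U)) f) ^ 2
        * (p₀ w * p₁ w / ((α * p₀ w + (1 - α) * p₁ w) * U))) Ω) :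
    0 ≤ (1 - α) * wVar Ω p₀ f + α * wVar Ω p₁ f
        - U * wVar Ω (fun w => p₀ w * p₁ w / ((α * p₀ w + (1 - α) * p₁ w) * U)) f := by
  obtain ⟨hα0, hα1⟩ := hα
  have hΩm : MeasurableSet Ω := by
    rw [hΩ0]; exact measurableSet_lt measurable_const hm0
  have ip0g : Integrable p₀ := by
    by_contra h; rw [integral_undef h] at hnorm0; norm_num at hnorm0
  have ip1g : Integrable p₁ := by
    by_contra h; rw [integral_undef h] at hnorm1; norm_num at hnorm1
  have hΩint0 : ∫ w in Ω, p₀ w = 1 := by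
    rw [setIntegral_eq_integral_of_forall_compl_eq_zero, hnorm0]
    intro x hx
    have : ¬ 0 < p₀ x := by rw [hΩ0] at hx; exact hx
    linarith [hpos0 x]
  have hΩint1 : ∫ w in Ω, p₁ w = 1 := by
    rw [setIntegral_eq_integral_of_forall_compl_eq_zero, hnorm1]
    intro x hx
    have : ¬ 0 < p₁ x := by rw [hΩ1] at hx; exact hx
    linarith [hpos1 x]
  have hUne : U ≠ 0 := ne_of_gt hUpos
  rcases eq_or_lt_of_le hα0 with h0 | hα0'
  · -- α = 0
    subst h0
    have hU1 : U = 1 := by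
      have he : ∫ w in Ω, p₀ w * p₁ w / (0 * p₀ w + (1 - 0) * p₁ w) = ∫ w in Ω, p₀ w := by
        refine setIntegral_congr_fun hΩm fun w hw => ?_
        have h1 : 0 < p₁ w := by rw [hΩ1] at hw; exact hw
        simp only [zero_mul, sub_zero, one_mul, zero_add, mul_one, sub_self, add_zero, mul_zero]; field_simp
      rw [hU, he, hΩint0]
    subst hU1
    have hmean : wMean Ω (fun v => p₀ v * p₁ v / ((0 * p₀ v + (1 - 0) * p₁ v) * 1)) f
        = wMean Ω p₀ f := by
      simp only [wMean]
      refine setIntegral_congr_fun hΩm fun w hw => ?_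
      have h1 : 0 < p₁ w := by rw [hΩ1] at hw; exact hw
      simp only [zero_mul, sub_zero, one_mul, zero_add, mul_one, sub_self, add_zero, mul_zero]; field_simp
    have hvar : wVar Ω (fun v => p₀ v * p₁ v / ((0 * p₀ v + (1 - 0) * p₁ v) * 1)) f
        = wVar Ω p₀ f := by
      simp only [wVar, hmean]
      refine setIntegral_congr_fun hΩm fun w hw => ?_
      have h1 : 0 < p₁ w := by rw [hΩ1] at hw; exact hw
      simp only [zero_mul, sub_zero, one_mul, zero_add, mul_one, sub_self, add_zero, mul_zero]; field_simp
    rw [hvar]; ring_nf; exact le_refl _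
  rcases eq_or_lt_of_le hα1 with h1 | hα1'
  · -- α = 1
    subst h1
    have hU1 : U = 1 := by
      have he : ∫ w in Ω, p₀ w * p₁ w / (1 * p₀ w + (1 - 1) * p₁ w) = ∫ w in Ω, p₁ w := by
        refine setIntegral_congr_fun hΩm fun w hw => ?_
        have h1 : 0 < p₀ w := by rw [hΩ0] at hw; exact hw
        simp only [zero_mul, sub_zero, one_mul, zero_add, mul_one, sub_self, add_zero, mul_zero]; field_simp
      rw [hU, he, hΩint1]
    subst hU1
    have hmean : wMean Ω (fun v => p₀ v * p₁ v / ((1 * p₀ v + (1 - 1) * p₁ v) * 1)) f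
        = wMean Ω p₁ f := by
      simp only [wMean]
      refine setIntegral_congr_fun hΩm fun w hw => ?_
      have h1 : 0 < p₀ w := by rw [hΩ0] at hw; exact hw
      simp only [zero_mul, sub_zero, one_mul, zero_add, mul_one, sub_self, add_zero, mul_zero]; field_simp
    have hvar : wVar Ω (fun v => p₀ v * p₁ v / ((1 * p₀ v + (1 - 1) * p₁ v) * 1)) f
        = wVar Ω p₁ f := by
      simp only [wVar, hmean]
      refine setIntegral_congr_fun hΩm fun w hw => ?_
      have h1 : 0 < p₀ w := by rw [hΩ0] at hw; exact hw
      simp only [zero_mul, sub_zero, one_mul, zero_add, mul_one, sub_self, add_zero, mul_zero]; field_simp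
    rw [hvar]; ring_nf; exact le_refl _
  -- main case 0 < α < 1
  have hβ : 0 < 1 - α := by linarith
  have hαβ : 0 < α * (1 - α) := mul_pos hα0' hβ
  have hαβne : α * (1 - α) ≠ 0 := ne_of_gt hαβ
  set m0 := wMean Ω p₀ f with hm0d
  set m1 := wMean Ω p₁ f with hm1d
  set m := wMean Ω (fun v => p₀ v * p₁ v / ((α * p₀ v + (1 - α) * p₁ v) * U)) f with hmd
  set Q : ℝ → ℝ := fun w => p₀ w * p₁ w / (α * p₀ w + (1 - α) * p₁ w) with hQd
  have hdivU : ∀ s y : ℝ, U * (s * (y / U)) = s * y := by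
    intro s y; field_simp
  have i1 : IntegrableOn p₀ Ω := ip0g.integrableOn
  have i2 : IntegrableOn p₁ Ω := ip1g.integrableOn
  have i3 : IntegrableOn Q Ω := hUint
  have ifQ : IntegrableOn (fun w => f w * Q w) Ω := by
    have e : (fun w => f w * Q w)
        = fun w => U * (f w * (p₀ w * p₁ w / ((α * p₀ w + (1 - α) * p₁ w) * U))) := by
      funext w; simp only [hQd]; rw [← div_div, hdivU]
    rw [e]; exact hfα.const_mul U
  have if2p0 : IntegrableOn (fun w => f w ^ 2 * p₀ w) Ω := by
    have e : (fun w => f w ^ 2 * p₀ w)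
        = fun w => (f w - m0) ^ 2 * p₀ w + (2 * m0) * (f w * p₀ w) - m0 ^ 2 * p₀ w := by
      funext w; ring
    rw [e]; exact (hv0.add (hf0.const_mul (2 * m0))).sub (i1.const_mul (m0 ^ 2))
  have if2p1 : IntegrableOn (fun w => f w ^ 2 * p₁ w) Ω := by
    have e : (fun w => f w ^ 2 * p₁ w)
        = fun w => (f w - m1) ^ 2 * p₁ w + (2 * m1) * (f w * p₁ w) - m1 ^ 2 * p₁ w := by
      funext w; ring
    rw [e]; exact (hv1.add (hf1.const_mul (2 * m1))).sub (i2.const_mul (m1 ^ 2))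
  have i4 : IntegrableOn (fun w => (f w - m) * p₀ w) Ω := by
    have e : (fun w => (f w - m) * p₀ w) = fun w => f w * p₀ w - m * p₀ w := by
      funext w; ring
    rw [e]; exact hf0.sub (i1.const_mul m)
  have i5 : IntegrableOn (fun w => (f w - m) * p₁ w) Ω := by
    have e : (fun w => (f w - m) * p₁ w) = fun w => f w * p₁ w - m * p₁ w := by
      funext w; ring
    rw [e]; exact hf1.sub (i2.const_mul m)
  have i6 : IntegrableOn (fun w => (f w - m) * Q w) Ω := by
    have e : (fun w => (f w - m) * Q w) = fun w => f w * Q w - m * Q w := by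
      funext w; ring
    rw [e]; exact ifQ.sub (i3.const_mul m)
  have i7 : IntegrableOn (fun w => (f w - m) ^ 2 * p₀ w) Ω := by
    have e : (fun w => (f w - m) ^ 2 * p₀ w)
        = fun w => f w ^ 2 * p₀ w - (2 * m) * (f w * p₀ w) + m ^ 2 * p₀ w := by
      funext w; ring
    rw [e]; exact (if2p0.sub (hf0.const_mul (2 * m))).add (i1.const_mul (m ^ 2))
  have i8 : IntegrableOn (fun w => (f w - m) ^ 2 * p₁ w) Ω := by
    have e : (fun w => (f w - m) ^ 2 * p₁ w)
        = fun w => f w ^ 2 * p₁ w - (2 * m) * (f w * p₁ w) + m ^ 2 * p₁ w := by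
      funext w; ring
    rw [e]; exact (if2p1.sub (hf1.const_mul (2 * m))).add (i2.const_mul (m ^ 2))
  have i9 : IntegrableOn (fun w => (f w - m) ^ 2 * Q w) Ω := by
    have e : (fun w => (f w - m) ^ 2 * Q w)
        = fun w => U * ((f w - m) ^ 2
            * (p₀ w * p₁ w / ((α * p₀ w + (1 - α) * p₁ w) * U))) := by
      funext w; simp only [hQd]; rw [← div_div, hdivU]
    rw [e]; exact hvα.const_mul U
  have hIQ : ∫ w in Ω, Q w = U := hU.symm
  have hIfQ : ∫ w in Ω, f w * Q w = U * m := by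
    have e1 : ∫ w in Ω, f w * Q w
        = ∫ w in Ω, U * (f w * (p₀ w * p₁ w / ((α * p₀ w + (1 - α) * p₁ w) * U))) := by
      refine setIntegral_congr_fun hΩm fun w hw => ?_
      simp only [hQd]; rw [← div_div, hdivU]
    rw [e1, integral_const_mul, hmd]
    simp only [wMean]
  have hA : ∫ w in Ω, (f w - m) * p₀ w = m0 - m := by
    have e : (fun w => (f w - m) * p₀ w) = fun w => f w * p₀ w - m * p₀ w := by
      funext w; ring
    rw [e, integral_sub hf0 (i1.const_mul m), integral_const_mul, hΩint0, hm0d]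
    simp only [wMean]; ring
  have hB : ∫ w in Ω, (f w - m) * p₁ w = m1 - m := by
    have e : (fun w => (f w - m) * p₁ w) = fun w => f w * p₁ w - m * p₁ w := by
      funext w; ring
    rw [e, integral_sub hf1 (i2.const_mul m), integral_const_mul, hΩint1, hm1d]
    simp only [wMean]; ring
  have hC : ∫ w in Ω, (f w - m) * Q w = 0 := by
    have e : (fun w => (f w - m) * Q w) = fun w => f w * Q w - m * Q w := by
      funext w; ring
    rw [e, integral_sub ifQ (i3.const_mul m), integral_const_mul, hIQ, hIfQ]
    ring
  set c := (α * (1 - α))⁻¹ with hcd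
  set A := m0 - m with hAd
  set B := m1 - m with hBd
  set K := A - B with hKd
  set I0 := ∫ w in Ω, (f w - m) ^ 2 * p₀ w with hI0d
  set I1 := ∫ w in Ω, (f w - m) ^ 2 * p₁ w with hI1d
  set IQ2 := ∫ w in Ω, (f w - m) ^ 2 * Q w with hIQ2d
  set X : ℝ → ℝ := fun w => (c * (1 - α)) * p₀ w + (c * α) * p₁ w + (-c) * Q w with hXd
  set Y : ℝ → ℝ := fun w => (-K) * p₀ w + K * p₁ w + (c * (1 - α)) * ((f w - m) * p₀ w)
      + (c * α) * ((f w - m) * p₁ w) + (-c) * ((f w - m) * Q w) with hYd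
  set Z : ℝ → ℝ := fun w => (K ^ 2 * α) * p₀ w + (K ^ 2 * (1 - α)) * p₁ w
      + (-(2 * K)) * ((f w - m) * p₀ w) + (2 * K) * ((f w - m) * p₁ w)
      + (c * (1 - α)) * ((f w - m) ^ 2 * p₀ w) + (c * α) * ((f w - m) ^ 2 * p₁ w)
      + (-c) * ((f w - m) ^ 2 * Q w) with hZd
  set NS := ∫ w in Ω, X w with hNSd
  set ND := ∫ w in Ω, Y w with hNDd
  set N2 := ∫ w in Ω, Z w with hN2d
  have iX : IntegrableOn X Ω := by
    rw [hXd]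
    exact ((i1.const_mul _).add (i2.const_mul _)).add (i3.const_mul _)
  have iY : IntegrableOn Y Ω := by
    rw [hYd]
    exact ((((i1.const_mul _).add (i2.const_mul _)).add (i4.const_mul _)).add
      (i5.const_mul _)).add (i6.const_mul _)
  have iZ : IntegrableOn Z Ω := by
    rw [hZd]
    exact ((((((i1.const_mul _).add (i2.const_mul _)).add (i4.const_mul _)).add
      (i5.const_mul _)).add (i7.const_mul _)).add (i8.const_mul _)).add (i9.const_mul _)
  have hNSv : α * (1 - α) * NS = 1 - U := by
    rw [hNSd]
    simp only [hXd]
    rw [intlin3 i1 i2 i3, hΩint0, hΩint1, hIQ, hcd]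
    field_simp
    ring
  have hNDv : α * (1 - α) * ND = (1 - α) * A + α * B := by
    rw [hNDd]
    simp only [hYd]
    rw [intlin5 i1 i2 i4 i5 i6, hΩint0, hΩint1, hA, hB, hC, hcd]
    field_simp
    ring
  have hN2v : α * (1 - α) * N2 = (1 - α) * I0 + α * I1 - IQ2 - α * (1 - α) * K ^ 2 := by
    rw [hN2d]
    simp only [hZd]
    rw [intlin7 i1 i2 i4 i5 i7 i8 i9, hΩint0, hΩint1, hA, hB,
      ← hI0d, ← hI1d, ← hIQ2d, hcd, hKd]
    field_simp
    ring
  have hpt : ∀ t : ℝ, ∀ w ∈ Ω, 0 ≤ t ^ 2 * X w + (2 * t) * Y w + Z w := by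
    intro t w hw
    have hp0 : 0 < p₀ w := by rw [hΩ0] at hw; exact hw
    have hp1 : 0 < p₁ w := by rw [hΩ1] at hw; exact hw
    have hP : 0 < α * p₀ w + (1 - α) * p₁ w :=
      add_pos (mul_pos hα0' hp0) (mul_pos hβ hp1)
    have key : t ^ 2 * X w + (2 * t) * Y w + Z w
        = ((f w - m) * (p₀ w - p₁ w) - K * (α * p₀ w + (1 - α) * p₁ w)
            + t * (p₀ w - p₁ w)) ^ 2 / (α * p₀ w + (1 - α) * p₁ w) := by
      simp only [hXd, hYd, hZd, hQd]
      rw [hcd]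
      field_simp
      ring
    rw [key]
    positivity
  have hN2nn : 0 ≤ N2 := by
    rw [hN2d]
    refine setIntegral_nonneg hΩm fun w hw => ?_
    have h := hpt 0 w hw
    simpa using h
  have hquad : ∀ x : ℝ, 0 ≤ NS * (x * x) + (2 * ND) * x + N2 := by
    intro t
    have h1 : 0 ≤ ∫ w in Ω, (t ^ 2 * X w + (2 * t) * Y w + Z w) :=
      setIntegral_nonneg hΩm (hpt t)
    have h2 : ∫ w in Ω, (t ^ 2 * X w + (2 * t) * Y w + Z w)
        = t ^ 2 * NS + (2 * t) * ND + N2 := by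
      have e : (fun w => t ^ 2 * X w + (2 * t) * Y w + Z w)
          = fun w => t ^ 2 * X w + (2 * t) * Y w + 1 * Z w := by
        funext w; ring
      rw [e, intlin3 iX iY iZ, ← hNSd, ← hNDd, ← hN2d]
      ring
    have h3 : NS * (t * t) + (2 * ND) * t + N2 = t ^ 2 * NS + (2 * t) * ND + N2 := by
      ring
    rw [h3, ← h2]; exact h1
  have hdisc := discrim_le_zero hquad
  rw [discrim] at hdisc
  have hV0 : wVar Ω p₀ f = I0 - A ^ 2 := by
    simp only [wVar]
    rw [← hm0d]
    have e : (fun w => (f w - m0) ^ 2 * p₀ w)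
        = fun w => 1 * ((f w - m) ^ 2 * p₀ w) + (-(2 * A)) * ((f w - m) * p₀ w)
            + A ^ 2 * p₀ w := by
      funext w; rw [hAd]; ring
    rw [e, intlin3 i7 i4 i1, hΩint0, hA, ← hI0d]
    ring
  have hV1 : wVar Ω p₁ f = I1 - B ^ 2 := by
    simp only [wVar]
    rw [← hm1d]
    have e : (fun w => (f w - m1) ^ 2 * p₁ w)
        = fun w => 1 * ((f w - m) ^ 2 * p₁ w) + (-(2 * B)) * ((f w - m) * p₁ w)
            + B ^ 2 * p₁ w := by
      funext w; rw [hBd]; ring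
    rw [e, intlin3 i8 i5 i2, hΩint1, hB, ← hI1d]
    ring
  have hVα : U * wVar Ω (fun w => p₀ w * p₁ w / ((α * p₀ w + (1 - α) * p₁ w) * U)) f
      = IQ2 := by
    simp only [wVar]
    rw [← hmd, ← integral_const_mul, hIQ2d]
    refine setIntegral_congr_fun hΩm fun w hw => ?_
    simp only [hQd]
    rw [← div_div, hdivU]
  rw [hV0, hV1, hVα]
  have hT3 : ND ^ 2 ≤ NS * N2 := by
    have e : (2 * ND) ^ 2 = 4 * ND ^ 2 := by ring
    linarith only [hdisc, e]
  have hT4 : (α * (1 - α) * ND) ^ 2 ≤ α * (1 - α) * ((1 - U) * N2) := by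
    calc (α * (1 - α) * ND) ^ 2 = (α * (1 - α)) ^ 2 * ND ^ 2 := by ring
      _ ≤ (α * (1 - α)) ^ 2 * (NS * N2) := mul_le_mul_of_nonneg_left hT3 (sq_nonneg _)
      _ = α * (1 - α) * ((α * (1 - α) * NS) * N2) := by ring
      _ = α * (1 - α) * ((1 - U) * N2) := by rw [hNSv]
  have hT5 : α * (1 - α) * ((1 - U) * N2) ≤ α * (1 - α) * N2 := by
    have h6 : 0 ≤ α * (1 - α) * (U * N2) :=
      mul_nonneg hαβ.le (mul_nonneg hUpos.le hN2nn)
    have e : α * (1 - α) * N2 - α * (1 - α) * ((1 - U) * N2)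
        = α * (1 - α) * (U * N2) := by ring
    linarith only [h6, e]
  have hT2 : (1 - α) * A ^ 2 + α * B ^ 2 = (α * (1 - α) * ND) ^ 2 + α * (1 - α) * K ^ 2 := by
    have h7 : (1 - α) * A ^ 2 + α * B ^ 2
        = ((1 - α) * A + α * B) ^ 2 + α * (1 - α) * (A - B) ^ 2 := by ring
    rw [h7, ← hNDv, ← hKd]
  have hgoal : (1 - α) * (I0 - A ^ 2) + α * (I1 - B ^ 2) - IQ2
      = ((1 - α) * I0 + α * I1 - IQ2) - ((1 - α) * A ^ 2 + α * B ^ 2) := by ring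
  rw [hgoal, hT2]
  linarith only [hN2v, hT4, hT5]
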